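/- Every atom of a fair measure belongs to a totally invariant periodic orbit, i.e., a periodic orbit P of f with f⁻¹(P) = P. -/

import Mathlib

open MeasureTheory Set
open scoped ENNReal

/-- Every atom of a fair measure belongs to a totally invariant periodic orbit,
i.e. a periodic orbit `P` of `f` with `f⁻¹(P) = P`. -/
theorem fair_measure_atoms_totally_invariant_periodic
    {X : Type*} [MeasurableSpace X] [TopologicalSpace X] [PolishSpace X] [BorelSpace X]
    (f : X → X) (hf : Function.Surjective f) (hfm : Measurable f)
    (Xp : ℕ → Set X)
    (hXpm : ∀ i, MeasurableSet (Xp i))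
    (hcover : (⋃ i, Xp i) = Set.univ)
    (hdisj : Pairwise (Function.onFun Disjoint Xp))
    (himg : ∀ i, MeasurableSet (f '' Xp i))
    (hinj : ∀ i, Set.InjOn f (Xp i))
    (hbi : ∀ i, ∀ A : Set X, A ⊆ Xp i → MeasurableSet A → MeasurableSet (f '' A))
    (μ : Measure X) [IsProbabilityMeasure μ]
    (hinv : ∀ A : Set X, MeasurableSet A → μ (f ⁻¹' A) = μ A)
    (hfair : ∀ B : Set X, MeasurableSet B →
      (∀ i, B ⊆ f '' Xp i ∨ B ∩ f '' Xp i = ∅) →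
      ∀ i, B ⊆ f '' Xp i →
        μ (Xp i ∩ f ⁻¹' B) = μ B / ({j | B ⊆ f '' Xp j}.encard : ℝ≥0∞))
    (x : X) (hx : 0 < μ {x}) :
    ∃ p : ℕ, 0 < p ∧ f^[p] x = x ∧
      f ⁻¹' {y : X | ∃ k : ℕ, f^[k] x = y} = {y : X | ∃ k : ℕ, f^[k] x = y} := by
  -- masses are nondecreasing along orbits
  have hstep : ∀ z : X, μ {z} ≤ μ {f z} := by
    intro z
    calc μ {z} ≤ μ (f ⁻¹' {f z}) := measure_mono (by simp)
      _ = μ {f z} := hinv _ (measurableSet_singleton _)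
  have hmass : ∀ k : ℕ, μ {x} ≤ μ {f^[k] x} := by
    intro k
    induction k with
    | zero => simp
    | succ n ih =>
      rw [Function.iterate_succ_apply']
      exact le_trans ih (hstep _)
  -- the forward orbit of x
  set O : Set X := {y : X | ∃ k : ℕ, f^[k] x = y} with hO
  have hmassO : ∀ y ∈ O, μ {x} ≤ μ {y} := by
    rintro y ⟨k, rfl⟩; exact hmass k
  -- the orbit is finite
  have hOfin : O.Finite := by
    by_contra hinf
    have hinf' : O.Infinite := hinf
    have htop := hinf'.meas_eq_top (μ := μ) ⟨μ {x}, hx.ne', hmassO⟩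
    have hle : μ O ≤ 1 := prob_le_one
    rw [htop] at hle
    exact absurd hle (by simp)
  have hOmeas : MeasurableSet O := hOfin.measurableSet
  -- every preimage of an atom is an atom
  have hpre : ∀ y : X, 0 < μ {y} → ∀ z : X, f z = y → 0 < μ {z} := by
    intro y hy z hz
    obtain ⟨i, hzi⟩ : ∃ i, z ∈ Xp i := by
      have : z ∈ ⋃ i, Xp i := hcover ▸ Set.mem_univ z
      simpa using this
    have hsub : ({y} : Set X) ⊆ f '' Xp i := by
      simp only [Set.singleton_subset_iff]
      exact ⟨z, hzi, hz⟩
    have halt : ∀ j, ({y} : Set X) ⊆ f '' Xp j ∨ ({y} : Set X) ∩ f '' Xp j = ∅ := by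
      intro j
      by_cases h : y ∈ f '' Xp j
      · exact Or.inl (by simpa using h)
      · right
        ext w; simp only [Set.mem_inter_iff, Set.mem_singleton_iff, Set.mem_empty_iff_false,
          iff_false, not_and]
        rintro rfl; exact h
    -- the preimage of y in branch j, for j in the branch set, is a singleton of mass μ{y}/c
    have hbranch : ∀ j, ({y} : Set X) ⊆ f '' Xp j →
        μ (Xp j ∩ f ⁻¹' {y}) = μ {y} / ({j | ({y} : Set X) ⊆ f '' Xp j}.encard : ℝ≥0∞) :=
      hfair {y} (measurableSet_singleton y) halt
    set c : ℝ≥0∞ := (({j | ({y} : Set X) ⊆ f '' Xp j}.encard : ℕ∞) : ℝ≥0∞) with hc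
    -- c is finite
    have hcne : c ≠ ⊤ := by
      intro htop
      have hzero : ∀ j, μ (Xp j ∩ f ⁻¹' {y}) = 0 := by
        intro j
        rcases halt j with h | h
        · rw [hbranch j h, htop]; simp
        · have : Xp j ∩ f ⁻¹' {y} = ∅ := by
            ext w
            simp only [Set.mem_inter_iff, Set.mem_preimage, Set.mem_singleton_iff,
              Set.mem_empty_iff_false, iff_false, not_and]
            intro hw hfw
            have : y ∈ ({y} : Set X) ∩ f '' Xp j := ⟨rfl, w, hw, hfw⟩
            simp [h] at this
          simp [this]
      have hcov : f ⁻¹' {y} = ⋃ j, Xp j ∩ f ⁻¹' {y} := by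
        rw [← Set.iUnion_inter, hcover, Set.univ_inter]
      have : μ (f ⁻¹' {y}) = 0 := by
        rw [hcov]
        exact le_antisymm (le_trans (measure_iUnion_le _) (by simp [hzero])) zero_le
      rw [hinv _ (measurableSet_singleton y)] at this
      exact absurd this hy.ne'
    -- the branch preimage is exactly {z}
    have hsing : Xp i ∩ f ⁻¹' {y} = {z} := by
      ext w
      simp only [Set.mem_inter_iff, Set.mem_preimage, Set.mem_singleton_iff]
      constructor
      · rintro ⟨hw, hfw⟩
        exact hinj i hw hzi (by rw [hfw, hz])
      · rintro rfl; exact ⟨hzi, hz⟩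
    have := hbranch i hsub
    rw [hsing] at this
    rw [this]
    exact ENNReal.div_pos hy.ne' hcne
  -- x is periodic
  have hper : ∃ p : ℕ, 0 < p ∧ f^[p] x = x := by
    by_contra hnp
    push_neg at hnp
    set O' : Set X := {y : X | ∃ k : ℕ, f^[k] (f x) = y} with hO'
    have hO'sub : O' ⊆ O := by
      rintro y ⟨k, rfl⟩
      exact ⟨k + 1, by rw [Function.iterate_succ_apply]⟩
    have hxO' : x ∉ O' := by
      rintro ⟨k, hk⟩
      exact hnp (k + 1) (Nat.succ_pos k) (by rw [Function.iterate_succ_apply]; exact hk)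
    have hO'fin : O'.Finite := hOfin.subset hO'sub
    have hOsub' : O ⊆ f ⁻¹' O' := by
      rintro y ⟨k, rfl⟩
      exact ⟨k, by rw [← Function.iterate_succ_apply, Function.iterate_succ_apply']⟩
    have h1 : μ O ≤ μ O' := by
      calc μ O ≤ μ (f ⁻¹' O') := measure_mono hOsub'
        _ = μ O' := hinv _ hO'fin.measurableSet
    have h2 : μ O' + μ {x} ≤ μ O := by
      have hsub2 : {x} ∪ O' ⊆ O := Set.union_subset (by simp only [Set.singleton_subset_iff]; exact ⟨0, rfl⟩) hO'sub
      calc μ O' + μ {x} = μ ({x} ∪ O') := by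
            rw [measure_union (Set.disjoint_singleton_left.mpr hxO') hO'fin.measurableSet, add_comm]
        _ ≤ μ O := measure_mono hsub2
    have hfin : μ O' ≠ ⊤ := (measure_lt_top μ O').ne
    exact absurd (le_trans h2 h1) (ENNReal.lt_add_right hfin hx.ne').not_ge
  obtain ⟨p, hp, hpx⟩ := hper
  refine ⟨p, hp, hpx, ?_⟩
  -- total invariance
  apply Set.Subset.antisymm
  · -- f ⁻¹' O ⊆ O
    intro z hz
    by_contra hzO
    obtain ⟨k, hk⟩ : ∃ k : ℕ, f^[k] x = f z := hz
    have hzatom : 0 < μ {z} := hpre (f^[k] x) (lt_of_lt_of_le hx (hmass k)) z hk.symm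
    have hOpre : O ⊆ f ⁻¹' O := by
      rintro y ⟨j, rfl⟩
      exact ⟨j + 1, by rw [Function.iterate_succ_apply']⟩
    have hsub : {z} ∪ O ⊆ f ⁻¹' O :=
      Set.union_subset (by simpa using Set.mem_setOf.mpr ⟨k, hk⟩) hOpre
    have h1 : μ O + μ {z} ≤ μ (f ⁻¹' O) := by
      calc μ O + μ {z} = μ ({z} ∪ O) := by
            rw [measure_union (Set.disjoint_singleton_left.mpr hzO) hOmeas, add_comm]
        _ ≤ μ (f ⁻¹' O) := measure_mono hsub
    rw [hinv _ hOmeas] at h1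
    have hfin : μ O ≠ ⊤ := (measure_lt_top μ O).ne
    exact absurd h1 (ENNReal.lt_add_right hfin hzatom.ne').not_ge
  · rintro y ⟨k, rfl⟩
    exact ⟨k + 1, by rw [Function.iterate_succ_apply']⟩
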